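/- Let u, w : ℝ³ → ℝ be bounded measurable functions and ρ_ε a standard mollifier. Then the commutator identity (ρ_ε⋆(uw))(X) - (ρ_ε⋆u)(X)(ρ_ε⋆w)(X) = ∫ δ_Y u(X) δ_Y w(X) ρ_ε(Y) dY - (u - ρ_ε⋆u)(X)(w - ρ_ε⋆w)(X) holds for every X, where δ_Y f(X) = f(X - Y) - f(X). -/

import Mathlib

open MeasureTheory

/-- Constantin–E–Titi commutator identity
`(ρ_ε⋆(uw)) - (ρ_ε⋆u)(ρ_ε⋆w) = ∫ δ_Y u δ_Y w ρ_ε dY - (u - ρ_ε⋆u)(w - ρ_ε⋆w)`. -/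
theorem stmt_3 (ρε : (ℝ × ℝ) × ℝ → ℝ)
    (hρ_cont : Continuous ρε) (hρ_nonneg : ∀ Y, 0 ≤ ρε Y)
    (hρ_supp : HasCompactSupport ρε)
    (hρ_norm : (∫ Y : (ℝ × ℝ) × ℝ, ρε Y) = 1)
    (u w : (ℝ × ℝ) × ℝ → ℝ) (Bu Bw : ℝ)
    (hu_meas : Measurable u) (hw_meas : Measurable w)
    (hu_bdd : ∀ X, |u X| ≤ Bu) (hw_bdd : ∀ X, |w X| ≤ Bw) :
    ∀ X : (ℝ × ℝ) × ℝ,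
      (∫ Y, ρε Y * (u (X - Y) * w (X - Y))) -
          (∫ Y, ρε Y * u (X - Y)) * (∫ Y, ρε Y * w (X - Y)) =
        (∫ Y, (u (X - Y) - u X) * (w (X - Y) - w X) * ρε Y) -
          (u X - ∫ Y, ρε Y * u (X - Y)) * (w X - ∫ Y, ρε Y * w (X - Y)) := by
  intro X
  have hρ_int : Integrable ρε := hρ_cont.integrable_of_hasCompactSupport hρ_supp
  have key : ∀ g : (ℝ × ℝ) × ℝ → ℝ, Measurable g → (∃ B, ∀ Z, |g Z| ≤ B) →
      Integrable (fun Y => ρε Y * g (X - Y)) := by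
    rintro g hg ⟨B, hB⟩
    have h := hρ_int.bdd_mul (c := B)
      ((hg.comp (measurable_const.sub measurable_id)).aestronglyMeasurable)
      (Filter.Eventually.of_forall fun Y => by simpa [Real.norm_eq_abs] using hB (X - Y))
    simpa [mul_comm] using h
  have h1 : Integrable (fun Y => ρε Y * (u (X - Y) * w (X - Y))) := by
    refine key _ (hu_meas.mul hw_meas) ⟨Bu * Bw, fun Z => ?_⟩
    rw [Pi.mul_apply, abs_mul]
    exact mul_le_mul (hu_bdd Z) (hw_bdd Z) (abs_nonneg _)
      ((abs_nonneg _).trans (hu_bdd Z))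
  have h2 : Integrable (fun Y => ρε Y * u (X - Y)) := key _ hu_meas ⟨Bu, hu_bdd⟩
  have h3 : Integrable (fun Y => ρε Y * w (X - Y)) := key _ hw_meas ⟨Bw, hw_bdd⟩
  have hE : (∫ Y, (u (X - Y) - u X) * (w (X - Y) - w X) * ρε Y) =
      (∫ Y, ρε Y * (u (X - Y) * w (X - Y))) -
        u X * (∫ Y, ρε Y * w (X - Y)) -
        (w X * (∫ Y, ρε Y * u (X - Y)) - (u X * w X) * (∫ Y, ρε Y)) := by
    rw [show (fun Y => (u (X - Y) - u X) * (w (X - Y) - w X) * ρε Y) =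
        fun Y => (ρε Y * (u (X - Y) * w (X - Y)) - u X * (ρε Y * w (X - Y))) -
          (w X * (ρε Y * u (X - Y)) - (u X * w X) * ρε Y) from
      funext fun Y => by ring]
    have hA : Integrable (fun Y => ρε Y * (u (X - Y) * w (X - Y)) - u X * (ρε Y * w (X - Y))) :=
      h1.sub (h3.const_mul (u X))
    have hB : Integrable (fun Y => w X * (ρε Y * u (X - Y)) - (u X * w X) * ρε Y) :=
      (h2.const_mul (w X)).sub (hρ_int.const_mul (u X * w X))
    simp only [integral_sub hA hB,
      integral_sub h1 (h3.const_mul (u X)),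
      integral_sub (h2.const_mul (w X)) (hρ_int.const_mul (u X * w X)),
      integral_const_mul, integral_const_mul, integral_const_mul]
  rw [hE, hρ_norm]
  ring
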